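/- arXiv:2406.07035 — 2 statements merged into one kernel-verified Lean document; each statement's English description precedes it below -/
import Mathlib

section
/- Let H₀ be a real symmetric n×n matrix, x an index, λ not an eigenvalue of H₀ with ((H₀-λ)⁻¹)_{xx} ≠ 0, and set v = -1/((H₀-λ)⁻¹)_{xx}, H = H₀ + v e_x e_x^T. Then the eigenspace of H for eigenvalue λ containing a vector with nonzero x-coordinate is one-dimensional, spanned by (H₀-λ)⁻¹ e_x; any eigenvector ψ of H with eigenvalue λ and ψ(x) = 0 is also an eigenvector of H₀. -/
/-- For the rank-one construction with `v = -1/((H₀-λ)⁻¹)ₓₓ` and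
`H = H₀ + v eₓeₓᵀ`: every λ-eigenvector of `H` with nonzero `x`-coordinate is a
scalar multiple of `(H₀-λ)⁻¹eₓ`, and every λ-eigenvector with vanishing
`x`-coordinate is also an eigenvector of `H₀`. -/
theorem stmt11 {n : ℕ} (H₀ : Matrix (Fin n) (Fin n) ℝ) (hsym : H₀.IsSymm)
    (x : Fin n) (lam : ℝ)
    (hinv : IsUnit (H₀ - lam • (1 : Matrix (Fin n) (Fin n) ℝ)).det)
    (hxx : (H₀ - lam • (1 : Matrix (Fin n) (Fin n) ℝ))⁻¹ x x ≠ 0)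
    (v : ℝ) (hv : v = -((H₀ - lam • (1 : Matrix (Fin n) (Fin n) ℝ))⁻¹ x x)⁻¹)
    (ψ : Fin n → ℝ)
    (hψ : (H₀ + v • Matrix.vecMulVec (Pi.single x 1) (Pi.single x 1)).mulVec ψ = lam • ψ) :
    (ψ x ≠ 0 → ∃ c : ℝ,
      ψ = c • (H₀ - lam • (1 : Matrix (Fin n) (Fin n) ℝ))⁻¹.mulVec (Pi.single x 1)) ∧
    (ψ x = 0 → H₀.mulVec ψ = lam • ψ) := by
  set A := H₀ - lam • (1 : Matrix (Fin n) (Fin n) ℝ) with hA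
  have hM : (Matrix.vecMulVec (Pi.single x 1) (Pi.single x 1)).mulVec ψ
      = ψ x • (Pi.single x 1 : Fin n → ℝ) := by
    funext i
    simp [Matrix.mulVec, Matrix.vecMulVec_apply, dotProduct, Pi.single_apply,
      mul_ite, ite_mul, Finset.sum_ite_eq', mul_comm]
  have key : A.mulVec ψ = (-(v * ψ x)) • (Pi.single x 1 : Fin n → ℝ) := by
    have h1 : H₀.mulVec ψ + v • (ψ x • (Pi.single x 1 : Fin n → ℝ)) = lam • ψ := by
      rw [← hM, ← Matrix.smul_mulVec, ← Matrix.add_mulVec]; exact hψ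
    have h2 : (lam • (1 : Matrix (Fin n) (Fin n) ℝ)).mulVec ψ = lam • ψ := by
      simp [Matrix.smul_mulVec]
    rw [hA, Matrix.sub_mulVec, h2, ← h1]
    funext i
    simp [smul_smul]
  constructor
  · intro _
    refine ⟨-(v * ψ x), ?_⟩
    have : A⁻¹.mulVec (A.mulVec ψ) = ψ := by
      rw [Matrix.mulVec_mulVec, Matrix.nonsing_inv_mul _ hinv, Matrix.one_mulVec]
    calc ψ = A⁻¹.mulVec (A.mulVec ψ) := this.symm
      _ = -(v * ψ x) • A⁻¹.mulVec (Pi.single x 1) := by rw [key, Matrix.mulVec_smul]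
  · intro hx
    have h0 : A.mulVec ψ = 0 := by rw [key, hx]; simp
    have := h0
    rw [hA, Matrix.sub_mulVec, Matrix.smul_mulVec, Matrix.one_mulVec, sub_eq_zero] at this
    exact this
end

section
/- Let H₀ be a real symmetric n×n matrix with eigenvalues μ₁ < ⋯ < μ_{n-1} restricted appropriately; fix index x and let λ lie strictly between two consecutive eigenvalues of the principal submatrix H|_{Λ∖{x}} (equivalently in an interval where v ↦ λ_i(v) is a bijection). Then the change of variables v ↦ λ_i(H₀ + v e_x e_x^T) is a C¹ diffeomorphism from ℝ onto the open interval (μ_{i-1}^{(x)}, μ_i^{(x)}) between consecutive eigenvalues of the deleted submatrix, with derivative |φ_{λ_i}(x)|². -/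
open scoped Matrix Topology

namespace Stmt14Aux

variable {n : ℕ}

noncomputable def Mt (A : Matrix (Fin n) (Fin n) ℝ) (t : ℝ) : Matrix (Fin n) (Fin n) ℝ :=
  t • (1 : Matrix (Fin n) (Fin n) ℝ) - A

noncomputable def wv (A : Matrix (Fin n) (Fin n) ℝ) (h : Fin n → ℝ) (t : ℝ) : Fin n → ℝ :=
  ((Mt A t).det)⁻¹ • (Mt A t).adjugate.mulVec h

lemma mulVec_wv (A : Matrix (Fin n) (Fin n) ℝ) (h : Fin n → ℝ) (t : ℝ)
    (hd : (Mt A t).det ≠ 0) : (Mt A t).mulVec (wv A h t) = h := by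
  rw [wv, Matrix.mulVec_smul, Matrix.mulVec_mulVec, Matrix.mul_adjugate,
    Matrix.smul_mulVec, Matrix.one_mulVec, smul_smul, inv_mul_cancel₀ hd, one_smul]

lemma mulVec_inj (M : Matrix (Fin n) (Fin n) ℝ) (hd : M.det ≠ 0) {u u' : Fin n → ℝ}
    (h : M.mulVec u = M.mulVec u') : u = u' := by
  by_contra hne
  apply hd
  rw [← Matrix.exists_mulVec_eq_zero_iff]
  exact ⟨u - u', sub_ne_zero.2 hne, by rw [Matrix.mulVec_sub, h, sub_self]⟩

lemma continuousOn_wv (A : Matrix (Fin n) (Fin n) ℝ) (h : Fin n → ℝ) :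
    ContinuousOn (wv A h) {t | (Mt A t).det ≠ 0} := by
  have hM : Continuous fun t : ℝ => Mt A t :=
    (continuous_id.smul continuous_const).sub continuous_const
  have hdet : Continuous fun t => (Mt A t).det := hM.matrix_det
  have hadj : Continuous fun t => (Mt A t).adjugate.mulVec h :=
    hM.matrix_adjugate.matrix_mulVec continuous_const
  exact (hdet.continuousOn.inv₀ fun t ht => ht).smul hadj.continuousOn

lemma sym_dot {M : Matrix (Fin n) (Fin n) ℝ} (hM : Mᵀ = M) (u v : Fin n → ℝ) :
    M.mulVec u ⬝ᵥ v = u ⬝ᵥ M.mulVec v := by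
  rw [dotProduct_comm, Matrix.dotProduct_mulVec, ← Matrix.mulVec_transpose, hM,
    dotProduct_comm]

lemma Mt_symm {A : Matrix (Fin n) (Fin n) ℝ} (hA : Aᵀ = A) (t : ℝ) : (Mt A t)ᵀ = Mt A t := by
  rw [Mt, Matrix.transpose_sub, Matrix.transpose_smul, Matrix.transpose_one, hA]

lemma key_diff {A : Matrix (Fin n) (Fin n) ℝ} (hA : Aᵀ = A) (h : Fin n → ℝ) {s t : ℝ}
    (hs : (Mt A s).det ≠ 0) (ht : (Mt A t).det ≠ 0) :
    h ⬝ᵥ wv A h s - h ⬝ᵥ wv A h t = (t - s) * (wv A h t ⬝ᵥ wv A h s) := by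
  set ws := wv A h s
  set wt := wv A h t
  have h1 : h ⬝ᵥ ws = (Mt A t).mulVec wt ⬝ᵥ ws := by rw [mulVec_wv A h t ht]
  have h2 : h ⬝ᵥ wt = (Mt A s).mulVec ws ⬝ᵥ wt := by rw [mulVec_wv A h s hs]
  have h3 : Mt A t - Mt A s = (t - s) • (1 : Matrix (Fin n) (Fin n) ℝ) := by
    rw [Mt, Mt, sub_sub_sub_cancel_right, sub_smul]
  rw [h1, h2, sym_dot (Mt_symm hA t), dotProduct_comm ((Mt A s).mulVec ws) wt,
    ← dotProduct_sub, ← Matrix.sub_mulVec, h3, Matrix.smul_mulVec,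
    Matrix.one_mulVec, dotProduct_smul, smul_eq_mul]

lemma hasDerivAt_F {A : Matrix (Fin n) (Fin n) ℝ} (hA : Aᵀ = A) (h : Fin n → ℝ) (d t : ℝ)
    (ht : (Mt A t).det ≠ 0) :
    HasDerivAt (fun s => s - d - h ⬝ᵥ wv A h s) (1 + wv A h t ⬝ᵥ wv A h t) t := by
  have hU : IsOpen {s : ℝ | (Mt A s).det ≠ 0} := by
    have hM : Continuous fun s : ℝ => (Mt A s).det :=
      ((continuous_id.smul continuous_const).sub continuous_const).matrix_det
    exact isOpen_ne.preimage hM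
  have hcw : ContinuousAt (wv A h) t := (continuousOn_wv A h).continuousAt (hU.mem_nhds ht)
  have hg : ContinuousAt (fun s => 1 + wv A h t ⬝ᵥ wv A h s) t := by
    exact continuousAt_const.add
      (((continuous_const.dotProduct continuous_id).continuousAt).comp hcw)
  rw [hasDerivAt_iff_tendsto_slope]
  have hev : ∀ᶠ s in 𝓝[≠] t,
      (fun s => 1 + wv A h t ⬝ᵥ wv A h s) s
        = slope (fun s => s - d - h ⬝ᵥ wv A h s) t s := by
    filter_upwards [self_mem_nhdsWithin,
      nhdsWithin_le_nhds (hU.mem_nhds ht)] with s hs hsU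
    have hsne : s - t ≠ 0 := sub_ne_zero.2 hs
    rw [slope_def_field]
    have : (s - d - h ⬝ᵥ wv A h s) - (t - d - h ⬝ᵥ wv A h t)
        = (s - t) * (1 + wv A h t ⬝ᵥ wv A h s) := by
      have := key_diff hA h hsU ht
      ring_nf
      ring_nf at this
      linarith [this]
    rw [this, mul_div_cancel_left₀ _ hsne]
  refine Filter.Tendsto.congr' hev ?_
  exact (hg.tendsto).mono_left nhdsWithin_le_nhds

lemma Mt_def (A : Matrix (Fin n) (Fin n) ℝ) (t : ℝ) :
    Mt A t = t • (1 : Matrix (Fin n) (Fin n) ℝ) - A := rfl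

end Stmt14Aux

open Stmt14Aux in
/-- The change of variables `v ↦ λᵢ(H₀ + v eₓeₓᵀ)`: along a continuous simple
eigenvalue branch `λ(v)` with normalized eigenvector `φ(v)` not vanishing at
`x`, lying between two consecutive eigenvalues `a < b` of the principal
submatrix with row/column `x` deleted (and avoiding its spectrum), the map
`v ↦ λ(v)` is `C¹`, strictly increasing, maps `ℝ` onto `(a,b)`, and has
derivative `|φ(v)(x)|²`. -/
theorem stmt14 {n : ℕ} (H₀ : Matrix (Fin (n + 1)) (Fin (n + 1)) ℝ)
    (hsym : H₀.IsSymm) (x : Fin (n + 1))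
    (lam : ℝ → ℝ) (φ : ℝ → Fin (n + 1) → ℝ) (a b : ℝ) (hab : a < b)
    (heig : ∀ v, (H₀ + v • Matrix.vecMulVec (Pi.single x 1) (Pi.single x 1)).mulVec (φ v)
      = lam v • φ v)
    (hnorm : ∀ v, ∑ y, (φ v y) ^ 2 = 1)
    (hx : ∀ v, φ v x ≠ 0)
    (hsimple : ∀ v (ψ : Fin (n + 1) → ℝ),
      (H₀ + v • Matrix.vecMulVec (Pi.single x 1) (Pi.single x 1)).mulVec ψ = lam v • ψ →
        ∃ c : ℝ, ψ = c • φ v)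
    (hcont : Continuous lam)
    (ha : ∃ ua : Fin n → ℝ, ua ≠ 0 ∧
      (H₀.submatrix (Fin.succAbove x) (Fin.succAbove x)).mulVec ua = a • ua)
    (hb : ∃ ub : Fin n → ℝ, ub ≠ 0 ∧
      (H₀.submatrix (Fin.succAbove x) (Fin.succAbove x)).mulVec ub = b • ub)
    (hin : ∀ v, lam v ∈ Set.Ioo a b)
    (hgap : ∀ t ∈ Set.Ioo a b, ∀ u : Fin n → ℝ,
      (H₀.submatrix (Fin.succAbove x) (Fin.succAbove x)).mulVec u = t • u → u = 0) :
    ContDiff ℝ 1 lam ∧ StrictMono lam ∧ Set.range lam = Set.Ioo a b ∧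
      ∀ v, HasDerivAt lam ((φ v x) ^ 2) v := by
  classical
  set sa : Fin n → Fin (n + 1) := x.succAbove with hsadef
  set A : Matrix (Fin n) (Fin n) ℝ := H₀.submatrix sa sa with hAdef
  set h : Fin n → ℝ := fun i => H₀ (sa i) x with hhdef
  set d : ℝ := H₀ x x with hddef
  have hsym' : ∀ i j, H₀ i j = H₀ j i := by
    intro i j
    have := congrFun (congrFun hsym i) j
    rw [Matrix.transpose_apply] at this
    exact this.symm
  have hA : Aᵀ = A := by rw [hAdef, Matrix.transpose_submatrix, hsym]
  have hdet : ∀ t ∈ Set.Ioo a b, (Mt A t).det ≠ 0 := by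
    intro t ht hd0
    obtain ⟨u, hu0, hu⟩ := (Matrix.exists_mulVec_eq_zero_iff).2 hd0
    refine hu0 (hgap t ht u ?_)
    rw [Mt_def, Matrix.sub_mulVec, Matrix.smul_mulVec, Matrix.one_mulVec,
      sub_eq_zero] at hu
    exact hu.symm
  -- coordinate form of the eigenvalue equation
  have eqrow : ∀ (v : ℝ) (y : Fin (n + 1)),
      (∑ z, H₀ y z * φ v z) + v * (Pi.single x 1 : Fin (n+1) → ℝ) y * φ v x = lam v * φ v y := by
    intro v y
    have h0 := congrFun (heig v) y
    rw [Matrix.add_mulVec, Pi.add_apply, Matrix.smul_mulVec, Pi.smul_apply,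
      Pi.smul_apply, smul_eq_mul, smul_eq_mul] at h0
    have h1 : (H₀.mulVec (φ v)) y = ∑ z, H₀ y z * φ v z := rfl
    have h2 : ((Matrix.vecMulVec (Pi.single x 1) (Pi.single x 1)).mulVec (φ v)) y
        = (Pi.single x 1 : Fin (n+1) → ℝ) y * φ v x := by
      show ∑ j, Matrix.vecMulVec (Pi.single x (1:ℝ)) (Pi.single x 1) y j * φ v j = _
      simp [Matrix.vecMulVec_apply, Pi.single_apply, mul_assoc]
    rw [h1, h2, ← mul_assoc] at h0
    exact h0
  -- the key per-point facts
  have key : ∀ v : ℝ,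
      lam v - d - h ⬝ᵥ wv A h (lam v) = v ∧
      (φ v x) ^ 2 * (1 + wv A h (lam v) ⬝ᵥ wv A h (lam v)) = 1 := by
    intro v
    have hL := hin v
    have hdL := hdet (lam v) hL
    -- the deleted-row part of the eigenvalue equation
    have eq1 : (Mt A (lam v)).mulVec (fun i => φ v (sa i)) = φ v x • h := by
      funext i
      have h1 := eqrow v (sa i)
      rw [Fin.sum_univ_succAbove (fun z => H₀ (sa i) z * φ v z) x] at h1
      rw [Pi.single_eq_of_ne (Fin.succAbove_ne x i), mul_zero, zero_mul, add_zero] at h1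
      have h2 : ((Mt A (lam v)).mulVec (fun j => φ v (sa j))) i
          = lam v * φ v (sa i) - ∑ j, H₀ (sa i) (sa j) * φ v (sa j) := by
        rw [Mt_def, Matrix.sub_mulVec, Matrix.smul_mulVec, Matrix.one_mulVec,
          Pi.sub_apply, Pi.smul_apply, smul_eq_mul]
        congr 1
      rw [h2, Pi.smul_apply, smul_eq_mul, hhdef]
      linarith [h1]
    -- solve for the deleted part of the eigenvector
    have hu : (fun i => φ v (sa i)) = φ v x • wv A h (lam v) := by
      refine mulVec_inj (Mt A (lam v)) hdL ?_
      rw [eq1, Matrix.mulVec_smul, mulVec_wv A h (lam v) hdL]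
    constructor
    · -- row x of the eigenvalue equation
      have h1 := eqrow v x
      rw [Fin.sum_univ_succAbove (fun z => H₀ x z * φ v z) x, Pi.single_eq_same,
        mul_one] at h1
      have h2 : ∑ i, H₀ x (sa i) * φ v (sa i) = φ v x * (h ⬝ᵥ wv A h (lam v)) := by
        have : ∀ i, H₀ x (sa i) * φ v (sa i) = φ v x * (h i * wv A h (lam v) i) := by
          intro i
          have h3 : φ v (sa i) = φ v x * wv A h (lam v) i := by
            have := congrFun hu i
            simpa using this
          rw [h3, hhdef, hsym' x (sa i)]
          ring
        rw [Finset.sum_congr rfl fun i _ => this i, ← Finset.mul_sum]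
        rfl
      rw [h2, ← hddef] at h1
      have hc := hx v
      have h4 : (d + h ⬝ᵥ wv A h (lam v) + v) * φ v x = lam v * φ v x := by
        ring_nf
        ring_nf at h1
        linarith [h1]
      have h5 := mul_right_cancel₀ hc h4
      linarith [h5]
    · -- normalization
      have h1 := hnorm v
      rw [Fin.sum_univ_succAbove (fun y => φ v y ^ 2) x] at h1
      have h2 : ∀ i, φ v (sa i) ^ 2 = φ v x ^ 2 * (wv A h (lam v) i * wv A h (lam v) i) := by
        intro i
        have h3 : φ v (sa i) = φ v x * wv A h (lam v) i := by
          have := congrFun hu i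
          simpa using this
        rw [h3]; ring
      rw [Finset.sum_congr rfl fun i _ => h2 i, ← Finset.mul_sum] at h1
      have h4 : wv A h (lam v) ⬝ᵥ wv A h (lam v)
          = ∑ i, wv A h (lam v) i * wv A h (lam v) i := rfl
      rw [h4]
      ring_nf
      ring_nf at h1
      linarith [h1]
  -- the inverse change of variables
  set F : ℝ → ℝ := fun s => s - d - h ⬝ᵥ wv A h s with hFdef
  have hFlam : ∀ v, F (lam v) = v := fun v => (key v).1
  have hFd : ∀ t ∈ Set.Ioo a b, HasDerivAt F (1 + wv A h t ⬝ᵥ wv A h t) t :=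
    fun t ht => hasDerivAt_F hA h d t (hdet t ht)
  have hposv : ∀ t : ℝ, 0 < 1 + wv A h t ⬝ᵥ wv A h t := by
    intro t
    have : (0:ℝ) ≤ wv A h t ⬝ᵥ wv A h t :=
      Finset.sum_nonneg fun i _ => mul_self_nonneg _
    linarith
  have hFmono : StrictMonoOn F (Set.Ioo a b) := by
    refine strictMonoOn_of_deriv_pos (convex_Ioo a b)
      (fun t ht => (hFd t ht).continuousAt.continuousWithinAt) ?_
    intro t ht
    rw [interior_Ioo] at ht
    rw [(hFd t ht).deriv]
    exact hposv t
  have hlaminj : Function.Injective lam := by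
    intro v v' hvv
    rw [← hFlam v, ← hFlam v', hvv]
  have hmono : StrictMono lam := by
    intro v v' hvv
    rcases lt_trichotomy (lam v) (lam v') with hc | hc | hc
    · exact hc
    · exact absurd (hlaminj hc) (ne_of_lt hvv)
    · have := hFmono (hin v') (hin v) hc
      rw [hFlam, hFlam] at this
      linarith
  have hder : ∀ v, HasDerivAt lam ((φ v x) ^ 2) v := by
    intro v
    have h1 : HasDerivAt lam (1 + wv A h (lam v) ⬝ᵥ wv A h (lam v))⁻¹ v :=
      HasDerivAt.of_local_left_inverse hcont.continuousAt (hFd (lam v) (hin v))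
        (ne_of_gt (hposv (lam v))) (Filter.Eventually.of_forall hFlam)
    have h2 : (φ v x) ^ 2 = (1 + wv A h (lam v) ⬝ᵥ wv A h (lam v))⁻¹ :=
      eq_inv_of_mul_eq_one_left (key v).2
    rw [h2]
    exact h1
  refine ⟨?_, hmono, ?_, hder⟩
  · refine contDiff_one_iff_deriv.2 ⟨fun v => (hder v).differentiableAt, ?_⟩
    have hde : deriv lam = fun v => (1 + wv A h (lam v) ⬝ᵥ wv A h (lam v))⁻¹ := by
      funext v
      rw [(hder v).deriv, eq_inv_of_mul_eq_one_left (key v).2]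
    rw [hde]
    have hwl : Continuous fun v => wv A h (lam v) :=
      (continuousOn_wv A h).comp_continuous hcont fun v => hdet (lam v) (hin v)
    exact (continuous_const.add (hwl.dotProduct hwl)).inv₀
      fun v => ne_of_gt (hposv (lam v))
  · apply Set.Subset.antisymm
    · rintro t ⟨v, rfl⟩
      exact hin v
    · intro t ht
      have h1 : lam (F t - 1) < t := by
        by_contra hle
        push_neg at hle
        have := hFmono.monotoneOn ht (hin (F t - 1)) hle
        rw [hFlam] at this
        linarith
      have h2 : t < lam (F t + 1) := by
        by_contra hle
        push_neg at hle
        have := hFmono.monotoneOn (hin (F t + 1)) ht hle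
        rw [hFlam] at this
        linarith
      exact intermediate_value_univ (F t - 1) (F t + 1) hcont ⟨h1.le, h2.le⟩
end
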